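/- One-step predictor stability contraction: let π, ν ∈ P(𝕏), Q ∈ 𝒬, η ∈ ℋ, and suppose that for every q ∈ ℳ, ν(Q⁻¹(q)) = 0 implies π(Q⁻¹(q)) = 0. Then Σ_{q ∈ ℳ : π(Q⁻¹(q)) > 0} π(Q⁻¹(q)) · ‖F(π,Q,η,q) − F(ν,Q,η,q)‖_TV ≤ 2 (1 − min_{u∈𝕌} δ(P,u)) ‖π − ν‖_TV. In particular, if min_{u∈𝕌} δ(P,u) ≥ 1/2, the expected total variation between the one-step predictor updates started from priors π and ν is bounded by ‖π − ν‖_TV. -/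

import Mathlib

open Finset

noncomputable section

variable {X U M : Type}

/-- `π` is a probability mass function on the finite set `X`. -/
def IsPmf [Fintype X] (π : X → ℝ) : Prop :=
  (∀ x, 0 ≤ π x) ∧ ∑ x, π x = 1

/-- Mass that `π` assigns to the cell `Q⁻¹(q)`. -/
def mass [Fintype X] [DecidableEq M] (π : X → ℝ) (Q : X → M) (q : M) : ℝ :=
  ∑ x ∈ Finset.univ.filter (fun x => Q x = q), π x

/-- One-step predictor (Bayesian) update `F(π,Q,η,q)`. -/
def Fupd [Fintype X] [DecidableEq M] (P : X → U → X → ℝ)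
    (π : X → ℝ) (Q : X → M) (η : (X → M) → M → U) (q : M) : X → ℝ :=
  fun x' => (mass π Q q)⁻¹ *
    ∑ x ∈ Finset.univ.filter (fun x => Q x = q), P x (η Q q) x' * π x

/-- Total variation norm `‖π − ν‖_TV := Σ_x |π(x) − ν(x)|`. -/
def tvDist [Fintype X] (π ν : X → ℝ) : ℝ := ∑ x, |π x - ν x|

/-- The Dobrushin coefficient `δ(P,u) := min_{i,k} Σ_j min(P(j|i,u), P(j|k,u))`. -/
def dobrushin [Fintype X] [Nonempty X] (P : X → U → X → ℝ) (u : U) : ℝ :=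
  Finset.univ.inf' Finset.univ_nonempty
    (fun ik : X × X => ∑ j, min (P ik.1 u j) (P ik.2 u j))

/-- The minimal Dobrushin coefficient `min_{u∈𝕌} δ(P,u)`. -/
def minDobrushin [Fintype X] [Nonempty X] [Fintype U] [Nonempty U]
    (P : X → U → X → ℝ) : ℝ :=
  Finset.univ.inf' Finset.univ_nonempty (fun u : U => dobrushin P u)

lemma tv_pair_le [Fintype X] [Nonempty X]
    (P : X → U → X → ℝ) (hP : ∀ x u, IsPmf (P x u)) (u : U) (i k : X) :
    ∑ x', |P i u x' - P k u x'| ≤ 2 * (1 - dobrushin P u) := by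
  have h1 : ∀ x', |P i u x' - P k u x'|
      = P i u x' + P k u x' - 2 * min (P i u x') (P k u x') := by
    intro x'
    rcases le_total (P i u x') (P k u x') with h | h
    · rw [abs_of_nonpos (by linarith), min_eq_left h]; ring
    · rw [abs_of_nonneg (by linarith), min_eq_right h]; ring
  have hd : dobrushin P u ≤ ∑ j, min (P i u j) (P k u j) :=
    Finset.inf'_le _ (Finset.mem_univ (i, k))
  calc ∑ x', |P i u x' - P k u x'|
      = (∑ x', P i u x') + (∑ x', P k u x')
        - 2 * ∑ x', min (P i u x') (P k u x') := by
        simp only [h1, Finset.sum_sub_distrib, Finset.sum_add_distrib, Finset.mul_sum]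
    _ ≤ 2 * (1 - dobrushin P u) := by
        rw [(hP i u).2, (hP k u).2]; linarith

lemma dob_contract [Fintype X] [Nonempty X]
    (P : X → U → X → ℝ) (hP : ∀ x u, IsPmf (P x u)) (u : U)
    (f : X → ℝ) (hf : ∑ x, f x = 0) :
    ∑ x', |∑ x, P x u x' * f x| ≤ (1 - dobrushin P u) * ∑ x, |f x| := by
  set fp : X → ℝ := fun x => max (f x) 0 with hfp
  set fm : X → ℝ := fun x => max (-f x) 0 with hfm
  have hfpnn : ∀ x, 0 ≤ fp x := fun x => le_max_right _ _
  have hfmnn : ∀ x, 0 ≤ fm x := fun x => le_max_right _ _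
  have hsplit : ∀ x, f x = fp x - fm x := by
    intro x; simp only [hfp, hfm]
    rcases le_total (f x) 0 with h | h
    · rw [max_eq_right h, max_eq_left (by linarith)]; ring
    · rw [max_eq_left h, max_eq_right (by linarith)]; ring
  have habsx : ∀ x, |f x| = fp x + fm x := by
    intro x; simp only [hfp, hfm]
    rcases le_total (f x) 0 with h | h
    · rw [abs_of_nonpos h, max_eq_right h, max_eq_left (by linarith)]; ring
    · rw [abs_of_nonneg h, max_eq_left h, max_eq_right (by linarith)]; ring
  set s : ℝ := ∑ x, fp x with hs
  have hsm : ∑ x, fm x = s := by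
    have := hf
    simp only [hsplit, Finset.sum_sub_distrib] at this
    linarith [this]
  have habs_sum : ∑ x, |f x| = 2 * s := by
    simp only [habsx, Finset.sum_add_distrib, hsm]; ring
  have hsnn : 0 ≤ s := Finset.sum_nonneg fun x _ => hfpnn x
  rcases eq_or_lt_of_le hsnn with hs0 | hs0
  · -- s = 0 : f ≡ 0
    have hfp0 : ∀ x ∈ Finset.univ, fp x = 0 :=
      (Finset.sum_eq_zero_iff_of_nonneg fun x _ => hfpnn x).1 hs0.symm
    have hfm0 : ∀ x ∈ Finset.univ, fm x = 0 :=
      (Finset.sum_eq_zero_iff_of_nonneg fun x _ => hfmnn x).1 (hsm.trans hs0.symm)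
    have hf0 : ∀ x, f x = 0 := fun x => by
      rw [hsplit x, hfp0 x (mem_univ x), hfm0 x (mem_univ x)]; ring
    simp [hf0]
  · -- s > 0
    have key : ∀ x', s * (∑ x, P x u x' * f x)
        = ∑ i, ∑ k, fp i * fm k * (P i u x' - P k u x') := by
      intro x'
      have e1 : ∑ i, ∑ k, fp i * fm k * P i u x'
          = (∑ i, fp i * P i u x') * (∑ k, fm k) := by
        rw [Finset.sum_mul_sum]
        exact Finset.sum_congr rfl fun i _ => Finset.sum_congr rfl fun k _ => by ring
      have e2 : ∑ i, ∑ k, fp i * fm k * P k u x'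
          = (∑ i, fp i) * (∑ k, fm k * P k u x') := by
        rw [Finset.sum_mul_sum]
        exact Finset.sum_congr rfl fun i _ => Finset.sum_congr rfl fun k _ => by ring
      have e3 : ∑ x, P x u x' * f x
          = (∑ x, fp x * P x u x') - (∑ x, fm x * P x u x') := by
        rw [← Finset.sum_sub_distrib]
        exact Finset.sum_congr rfl fun x _ => by rw [hsplit x]; ring
      have e4 : ∑ i, ∑ k, fp i * fm k * (P i u x' - P k u x')
          = (∑ i, fp i * P i u x') * s - s * (∑ k, fm k * P k u x') := by
        simp only [mul_sub, Finset.sum_sub_distrib, e1, e2, hsm, ← hs]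
      rw [e3, e4]; ring
    have bnd : ∀ x', s * |∑ x, P x u x' * f x|
        ≤ ∑ i, ∑ k, fp i * fm k * |P i u x' - P k u x'| := by
      intro x'
      calc s * |∑ x, P x u x' * f x|
          = |∑ i, ∑ k, fp i * fm k * (P i u x' - P k u x')| := by
            rw [← key x', abs_mul, abs_of_nonneg hsnn]
        _
          ≤ ∑ i, |∑ k, fp i * fm k * (P i u x' - P k u x')| :=
            Finset.abs_sum_le_sum_abs _ _
        _ ≤ ∑ i, ∑ k, fp i * fm k * |P i u x' - P k u x'| := by
            refine Finset.sum_le_sum fun i _ => ?_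
            calc |∑ k, fp i * fm k * (P i u x' - P k u x')|
                ≤ ∑ k, |fp i * fm k * (P i u x' - P k u x')| :=
                  Finset.abs_sum_le_sum_abs _ _
              _ = ∑ k, fp i * fm k * |P i u x' - P k u x'| := by
                  refine Finset.sum_congr rfl fun k _ => ?_
                  rw [abs_mul, abs_of_nonneg (mul_nonneg (hfpnn i) (hfmnn k))]
    have main : s * (∑ x', |∑ x, P x u x' * f x|) ≤ 2 * (1 - dobrushin P u) * s * s := by
      calc s * (∑ x', |∑ x, P x u x' * f x|)
          = ∑ x', s * |∑ x, P x u x' * f x| := by rw [Finset.mul_sum]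
        _ ≤ ∑ x', ∑ i, ∑ k, fp i * fm k * |P i u x' - P k u x'| :=
            Finset.sum_le_sum fun x' _ => bnd x'
        _ = ∑ i, ∑ k, fp i * fm k * ∑ x', |P i u x' - P k u x'| := by
            rw [Finset.sum_comm]
            refine Finset.sum_congr rfl fun i _ => ?_
            rw [Finset.sum_comm]
            refine Finset.sum_congr rfl fun k _ => ?_
            rw [Finset.mul_sum]
        _ ≤ ∑ i, ∑ k, fp i * fm k * (2 * (1 - dobrushin P u)) := by
            refine Finset.sum_le_sum fun i _ => Finset.sum_le_sum fun k _ => ?_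
            exact mul_le_mul_of_nonneg_left (tv_pair_le P hP u i k)
              (mul_nonneg (hfpnn i) (hfmnn k))
        _ = 2 * (1 - dobrushin P u) * s * s := by
            rw [show (∑ i, ∑ k, fp i * fm k * (2 * (1 - dobrushin P u)))
                = ((∑ i, fp i) * (∑ k, fm k)) * (2 * (1 - dobrushin P u)) from by
              rw [Finset.sum_mul_sum, Finset.sum_mul]
              refine Finset.sum_congr rfl fun i _ => ?_
              rw [Finset.sum_mul]]
            rw [hsm, ← hs]; ring
    rw [habs_sum]
    nlinarith [main, hs0]

/-- One-step predictor stability contraction: let `π, ν ∈ P(𝕏)`,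
`Q ∈ 𝒬`, `η ∈ ℋ`, and suppose that for every `q ∈ ℳ`, `ν(Q⁻¹(q)) = 0` implies
`π(Q⁻¹(q)) = 0`. Then
`Σ_{q : π(Q⁻¹(q)) > 0} π(Q⁻¹(q)) · ‖F(π,Q,η,q) − F(ν,Q,η,q)‖_TV
  ≤ 2 (1 − min_{u∈𝕌} δ(P,u)) ‖π − ν‖_TV`.
In particular, if `min_{u∈𝕌} δ(P,u) ≥ 1/2`, the expected total variation between the
one-step predictor updates started from priors `π` and `ν` is bounded by `‖π − ν‖_TV`. -/
theorem one_step_predictor_stability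
    [Fintype X] [Fintype U] [Fintype M]
    [Nonempty X] [Nonempty U] [Nonempty M] [DecidableEq X] [DecidableEq M]
    (P : X → U → X → ℝ) (hP : ∀ x u, IsPmf (P x u))
    (π ν : X → ℝ) (hπ : IsPmf π) (hν : IsPmf ν)
    (Q : X → M) (η : (X → M) → M → U)
    (habs : ∀ q : M, mass ν Q q = 0 → mass π Q q = 0) :
    (∑ q ∈ Finset.univ.filter (fun q => 0 < mass π Q q),
        mass π Q q * tvDist (Fupd P π Q η q) (Fupd P ν Q η q)
      ≤ 2 * (1 - minDobrushin P) * tvDist π ν)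
    ∧ ((1 : ℝ) / 2 ≤ minDobrushin P →
        ∑ q ∈ Finset.univ.filter (fun q => 0 < mass π Q q),
            mass π Q q * tvDist (Fupd P π Q η q) (Fupd P ν Q η q)
          ≤ tvDist π ν) := by
  have hδle1 : minDobrushin P ≤ 1 := by
    obtain ⟨u0⟩ := (inferInstance : Nonempty U)
    obtain ⟨x0⟩ := (inferInstance : Nonempty X)
    calc minDobrushin P ≤ dobrushin P u0 :=
          Finset.inf'_le _ (Finset.mem_univ u0)
      _ ≤ ∑ j, min (P x0 u0 j) (P x0 u0 j) :=
          Finset.inf'_le _ (Finset.mem_univ ((x0, x0) : X × X))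
      _ = 1 := by simp only [min_self]; exact (hP x0 u0).2
  -- per-cell bound
  have hcell : ∀ q ∈ Finset.univ.filter (fun q => 0 < mass π Q q),
      mass π Q q * tvDist (Fupd P π Q η q) (Fupd P ν Q η q)
        ≤ 2 * (1 - minDobrushin P) *
          ∑ x ∈ Finset.univ.filter (fun x => Q x = q), |π x - ν x| := by
    intro q hq
    set F := Finset.univ.filter (fun x => Q x = q) with hF
    set mπ := mass π Q q with hmπdef
    set mν := mass ν Q q with hmνdef
    have hmπ : 0 < mπ := (Finset.mem_filter.1 hq).2
    have hmν : 0 < mν := by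
      rcases lt_or_eq_of_le (Finset.sum_nonneg fun x _ => hν.1 x : (0:ℝ) ≤ mν) with h | h
      · exact h
      · exact absurd (habs q h.symm) (by linarith)
    have hmπ' : mπ ≠ 0 := ne_of_gt hmπ
    have hmν' : mν ≠ 0 := ne_of_gt hmν
    set u := η Q q with hu
    set g : X → ℝ := fun x => if Q x = q then π x / mπ - ν x / mν else 0 with hg
    have hg0 : ∑ x, g x = 0 := by
      simp only [hg]
      rw [← Finset.sum_filter, Finset.sum_sub_distrib, ← Finset.sum_div, ← Finset.sum_div]
      rw [show (∑ x ∈ Finset.univ.filter (fun x => Q x = q), π x) = mπ from rfl,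
        show (∑ x ∈ Finset.univ.filter (fun x => Q x = q), ν x) = mν from rfl]
      field_simp
      ring
    have hdiff : ∀ x', Fupd P π Q η q x' - Fupd P ν Q η q x'
        = ∑ x, P x u x' * g x := by
      intro x'
      have hA : ∑ x, P x u x' * g x
          = ∑ x ∈ F, P x u x' * (π x / mπ - ν x / mν) := by
        rw [hF, Finset.sum_filter]
        exact Finset.sum_congr rfl fun x _ => by
          simp only [hg, mul_ite, mul_zero]
      have hB : ∑ x ∈ F, P x u x' * (π x / mπ - ν x / mν)
          = (∑ x ∈ F, P x u x' * π x) * mπ⁻¹ - (∑ x ∈ F, P x u x' * ν x) * mν⁻¹ := by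
        rw [Finset.sum_mul, Finset.sum_mul, ← Finset.sum_sub_distrib]
        exact Finset.sum_congr rfl fun x _ => by
          field_simp
      rw [hA, hB]
      simp only [Fupd, hF, hu, ← hmπdef, ← hmνdef]
      ring
    have htv : tvDist (Fupd P π Q η q) (Fupd P ν Q η q)
        ≤ (1 - dobrushin P u) * ∑ x, |g x| := by
      have := dob_contract P hP u g hg0
      simp only [tvDist]
      calc ∑ x', |Fupd P π Q η q x' - Fupd P ν Q η q x'|
          = ∑ x', |∑ x, P x u x' * g x| :=
            Finset.sum_congr rfl fun x' _ => by rw [hdiff x']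
        _ ≤ (1 - dobrushin P u) * ∑ x, |g x| := this
    have hmd : minDobrushin P ≤ dobrushin P u :=
      Finset.inf'_le _ (Finset.mem_univ u)
    have hgnn : (0:ℝ) ≤ ∑ x, |g x| := Finset.sum_nonneg fun x _ => abs_nonneg _
    have hmg : mπ * ∑ x, |g x| ≤ 2 * ∑ x ∈ F, |π x - ν x| := by
      have h1 : mπ * ∑ x, |g x| = ∑ x ∈ F, |π x - (mπ / mν) * ν x| := by
        rw [Finset.mul_sum]
        rw [show (∑ x, mπ * |g x|)
            = ∑ x, if Q x = q then |π x - (mπ / mν) * ν x| else 0 from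
          Finset.sum_congr rfl fun x _ => by
            simp only [hg]
            split
            · calc mπ * |π x / mπ - ν x / mν|
                  = |mπ| * |π x / mπ - ν x / mν| := by rw [abs_of_pos hmπ]
                _ = |mπ * (π x / mπ - ν x / mν)| := (abs_mul _ _).symm
                _ = |π x - (mπ / mν) * ν x| := by
                    rw [show mπ * (π x / mπ - ν x / mν)
                        = π x - (mπ / mν) * ν x from by field_simp]
            · simp]
        rw [← Finset.sum_filter, hF]
      have h5 : |mν - mπ| ≤ ∑ x ∈ F, |π x - ν x| := by
        have : mν - mπ = ∑ x ∈ F, (ν x - π x) := by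
          rw [Finset.sum_sub_distrib, hmπdef, hmνdef, mass, mass, hF]
        rw [this]
        calc |∑ x ∈ F, (ν x - π x)| ≤ ∑ x ∈ F, |ν x - π x| :=
              Finset.abs_sum_le_sum_abs _ _
          _ = ∑ x ∈ F, |π x - ν x| :=
              Finset.sum_congr rfl fun x _ => abs_sub_comm _ _
      have h4 : |1 - mπ / mν| * mν = |mν - mπ| := by
        calc |1 - mπ / mν| * mν = |1 - mπ / mν| * |mν| := by rw [abs_of_pos hmν]
          _ = |(1 - mπ / mν) * mν| := (abs_mul _ _).symm
          _ = |mν - mπ| := by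
              rw [show (1 - mπ / mν) * mν = mν - mπ from by field_simp]
      have h2 : ∑ x ∈ F, |π x - (mπ / mν) * ν x|
          ≤ (∑ x ∈ F, |π x - ν x|) + |1 - mπ / mν| * mν := by
        rw [hmνdef, mass, ← hF, Finset.mul_sum, ← Finset.sum_add_distrib]
        refine Finset.sum_le_sum fun x _ => ?_
        calc |π x - (mπ / mν) * ν x|
            = |(π x - ν x) + (1 - mπ / mν) * ν x| := by ring_nf
          _ ≤ |π x - ν x| + |(1 - mπ / mν) * ν x| := abs_add_le _ _
          _ = |π x - ν x| + |1 - mπ / mν| * ν x := by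
              rw [abs_mul, abs_of_nonneg (hν.1 x)]
      rw [h1]
      calc ∑ x ∈ F, |π x - (mπ / mν) * ν x|
          ≤ (∑ x ∈ F, |π x - ν x|) + |1 - mπ / mν| * mν := h2
        _ ≤ (∑ x ∈ F, |π x - ν x|) + |mν - mπ| := by rw [h4]
        _ ≤ 2 * ∑ x ∈ F, |π x - ν x| := by linarith [h5]
    -- combine
    have hdob_le : 1 - dobrushin P u ≤ 1 - minDobrushin P := by linarith
    have htvnn : 0 ≤ tvDist (Fupd P π Q η q) (Fupd P ν Q η q) :=
      Finset.sum_nonneg fun x _ => abs_nonneg _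
    have h1δ : 0 ≤ 1 - minDobrushin P := by linarith
    nlinarith [mul_le_mul_of_nonneg_left htv hmπ.le,
      mul_le_mul_of_nonneg_left hmg h1δ,
      mul_le_mul_of_nonneg_right hdob_le (mul_nonneg hmπ.le hgnn)]
  have hfib : ∑ q, ∑ x ∈ Finset.univ.filter (fun x => Q x = q), |π x - ν x|
      = tvDist π ν := Finset.sum_fiberwise _ _ _
  have h1δ : 0 ≤ 1 - minDobrushin P := by linarith
  have part1 : ∑ q ∈ Finset.univ.filter (fun q => 0 < mass π Q q),
      mass π Q q * tvDist (Fupd P π Q η q) (Fupd P ν Q η q)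
        ≤ 2 * (1 - minDobrushin P) * tvDist π ν := by
    calc ∑ q ∈ Finset.univ.filter (fun q => 0 < mass π Q q),
        mass π Q q * tvDist (Fupd P π Q η q) (Fupd P ν Q η q)
        ≤ ∑ q ∈ Finset.univ.filter (fun q => 0 < mass π Q q),
            2 * (1 - minDobrushin P) *
              ∑ x ∈ Finset.univ.filter (fun x => Q x = q), |π x - ν x| :=
          Finset.sum_le_sum hcell
      _ ≤ ∑ q, 2 * (1 - minDobrushin P) *
              ∑ x ∈ Finset.univ.filter (fun x => Q x = q), |π x - ν x| := by
          refine Finset.sum_le_sum_of_subset_of_nonneg (Finset.filter_subset _ _)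
            fun q _ _ => ?_
          exact mul_nonneg (by linarith)
            (Finset.sum_nonneg fun x _ => abs_nonneg _)
      _ = 2 * (1 - minDobrushin P) * tvDist π ν := by
          rw [← Finset.mul_sum, hfib]
  refine ⟨part1, fun hhalf => ?_⟩
  have htvnn : 0 ≤ tvDist π ν := Finset.sum_nonneg fun x _ => abs_nonneg _
  nlinarith [part1, htvnn, hhalf]

end
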